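/- Let n ≥ 1 and let Γ_n = ℤ^n ≀ ℤ be the torsion-free lamplighter group. For every finite group Q and every surjective homomorphism f : Γ_n → Q, there exist an integer m > 2, a surjective homomorphism g : Γ_n → Γ(m), and a homomorphism h : Γ(m) → Q such that f = h ∘ g. In particular, the finite quotients Γ(m) form a cofinal family among the finite quotients of Γ_n. -/

import Mathlib

open LaurentPolynomial

/-- The base group of the torsion-free lamplighter group: the (additive group of the)
free module of rank `n` over the Laurent polynomial ring `ℤ[T,T⁻¹]`. -/
abbrev LampBase (n : ℕ) : Type := Fin n → LaurentPolynomial ℤ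

/-- The shift automorphism of the base: multiplication by `T^z` in each coordinate. -/
noncomputable def lampShift (n : ℕ) (z : ℤ) : LampBase n ≃+ LampBase n where
  toFun v := fun i => T z * v i
  invFun v := fun i => T (-z) * v i
  left_inv v := by funext i; simp [← mul_assoc, ← T_add]
  right_inv v := by funext i; simp [← mul_assoc, ← T_add]
  map_add' v w := by funext i; simp [mul_add]

/-- The action of `ℤ` on the base group, where `1` acts by multiplication by `T`
in each coordinate. -/
noncomputable def lampAction (n : ℕ) :
    Multiplicative ℤ →* MulAut (Multiplicative (LampBase n)) where
  toFun z := AddEquiv.toMultiplicative (lampShift n z.toAdd)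
  map_one' := by
    refine MulEquiv.ext fun v => ?_
    show Multiplicative.ofAdd ((lampShift n (1 : Multiplicative ℤ).toAdd) v.toAdd) = v
    simp [lampShift]
  map_mul' z w := by
    refine MulEquiv.ext fun v => ?_
    show Multiplicative.ofAdd ((lampShift n (z * w).toAdd) v.toAdd)
        = Multiplicative.ofAdd ((lampShift n z.toAdd)
            (Multiplicative.ofAdd ((lampShift n w.toAdd) v.toAdd)).toAdd)
    simp only [toAdd_mul, toAdd_ofAdd, lampShift, AddEquiv.coe_mk, Equiv.coe_fn_mk]
    congr 1
    funext i
    rw [T_add, mul_assoc]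

/-- The torsion-free lamplighter group `ℤ^n ≀ ℤ`, realized as the semidirect product
of the free `ℤ[T,T⁻¹]`-module of rank `n` by `ℤ`, where `1 ∈ ℤ` acts by multiplication
by `T` in each coordinate. -/
abbrev Lamplighter (n : ℕ) : Type :=
  SemidirectProduct (Multiplicative (LampBase n)) (Multiplicative ℤ) (lampAction n)

/-- Two groups have the same finite quotients if every finite group is a quotient of one
iff it is a quotient of the other. -/
def SameFiniteQuotients (G H : Type*) [Group G] [Group H] : Prop :=
  ∀ (Q : Type) (_ : Group Q) (_ : Finite Q),
    (∃ f : G →* Q, Function.Surjective f) ↔ (∃ f : H →* Q, Function.Surjective f)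

/-- A group is residually finite if every nontrivial element is detected by a homomorphism
to some finite group. -/
def ResiduallyFinite (G : Type*) [Group G] : Prop :=
  ∀ g : G, g ≠ 1 → ∃ (Q : Type) (_ : Group Q) (_ : Finite Q) (f : G →* Q), f g ≠ 1

/-- The ring `R_m = (ℤ/mℤ)[X]/(X^m − 1)`. -/
abbrev Rm (m : ℕ) : Type :=
  Polynomial (ZMod m) ⧸ Ideal.span {(Polynomial.X : Polynomial (ZMod m)) ^ m - 1}

/-- The image of `X` in `R_m`, as a unit. -/
noncomputable def RmX (m : ℕ) [NeZero m] : (Rm m)ˣ where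
  val := Ideal.Quotient.mk _ Polynomial.X
  inv := Ideal.Quotient.mk _ (Polynomial.X ^ (m - 1))
  val_inv := by
    have h : (Polynomial.X : Polynomial (ZMod m)) * Polynomial.X ^ (m - 1) =
        Polynomial.X ^ m - 1 + 1 := by
      rw [← pow_succ']
      rw [show m - 1 + 1 = m from by have := NeZero.pos m; omega]
      ring
    have h2 : Ideal.Quotient.mk (Ideal.span {(Polynomial.X : Polynomial (ZMod m)) ^ m - 1})
        ((Polynomial.X : Polynomial (ZMod m)) ^ m - 1) = 0 :=
      Ideal.Quotient.eq_zero_iff_mem.mpr (Ideal.subset_span rfl)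
    rw [← map_mul, h, map_add, map_one, h2, zero_add]
  inv_val := by
    have h : (Polynomial.X : Polynomial (ZMod m)) ^ (m - 1) * Polynomial.X =
        Polynomial.X ^ m - 1 + 1 := by
      rw [← pow_succ]
      rw [show m - 1 + 1 = m from by have := NeZero.pos m; omega]
      ring
    have h2 : Ideal.Quotient.mk (Ideal.span {(Polynomial.X : Polynomial (ZMod m)) ^ m - 1})
        ((Polynomial.X : Polynomial (ZMod m)) ^ m - 1) = 0 :=
      Ideal.Quotient.eq_zero_iff_mem.mpr (Ideal.subset_span rfl)
    rw [← map_mul, h, map_add, map_one, h2, zero_add]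

lemma RmX_pow_eq_one (m : ℕ) [NeZero m] : RmX m ^ m = 1 := by
  ext
  push_cast [RmX]
  rw [← map_pow, ← map_one (Ideal.Quotient.mk _), Ideal.Quotient.mk_eq_mk_iff_sub_mem]
  exact Ideal.subset_span rfl

/-- The homomorphism from the cyclic group `C_m = ZMod m` (written multiplicatively)
to a group `G`, sending the generator `1` to a given element `g` satisfying `g ^ m = 1`. -/
def zmodPowHom {G : Type*} [Group G] (m : ℕ) [NeZero m] (g : G) (hg : g ^ m = 1) :
    Multiplicative (ZMod m) →* G where
  toFun k := g ^ (Multiplicative.toAdd k).val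
  map_one' := by
    show g ^ (0 : ZMod m).val = 1
    simp
  map_mul' a b := by
    show g ^ (a.toAdd + b.toAdd).val = g ^ a.toAdd.val * g ^ b.toAdd.val
    rw [ZMod.val_add, ← pow_eq_pow_mod _ hg, pow_add]

/-- The canonical homomorphism `AddAut A →* MulAut (Multiplicative A)`. -/
def addAutToMulAut (A : Type*) [AddGroup A] :
    Multiplicative (AddAut A) →* MulAut (Multiplicative A) where
  toFun e := AddEquiv.toMultiplicative e.toAdd
  map_one' := rfl
  map_mul' _ _ := rfl

/-- The action of `C_m` on `(R_m)^n` in which the generator of `C_m` acts on each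
coordinate by multiplication by `X`. -/
noncomputable def finLampAction (n m : ℕ) [NeZero m] :
    Multiplicative (ZMod m) →* MulAut (Multiplicative (Fin n → Rm m)) :=
  ((addAutToMulAut (Fin n → Rm m)).comp
    (DistribMulAction.toAddAut (Rm m)ˣ (Fin n → Rm m))).comp
      (zmodPowHom m (RmX m) (RmX_pow_eq_one m))

/-- The finite lamplighter group `Γ(m) = C_m^n ≀ C_m = (R_m)^n ⋊ C_m`, where the
generator of `C_m` acts on each coordinate of `(R_m)^n` by multiplication by `X`. -/
abbrev FinLamplighter (n m : ℕ) [NeZero m] : Type :=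
  SemidirectProduct (Multiplicative (Fin n → Rm m)) (Multiplicative (ZMod m))
    (finLampAction n m)


/-! ### Auxiliary material for the proof -/

section AuxRing

variable (m : ℕ) [NeZero m]

/-- The evaluation ring hom `ℤ[T,T⁻¹] → R_m`, `T ↦ X`. -/
noncomputable def rmHom : LaurentPolynomial ℤ →+* Rm m :=
  ((AddMonoidAlgebra.lift ℤ (Rm m) ℤ)
    ((Units.coeHom (Rm m)).comp (zpowersHom (Rm m)ˣ (RmX m)))).toRingHom

lemma rmHom_T (z : ℤ) : rmHom m (T z) = ↑(RmX m ^ z) := by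
  rw [rmHom, LaurentPolynomial.T]
  rw [AlgHom.toRingHom_eq_coe, RingHom.coe_coe]
  rw [AddMonoidAlgebra.lift_single]
  simp [zpowersHom_apply]

lemma rmHom_comp_toLaurent :
    (rmHom m).comp (Polynomial.toLaurent (R := ℤ)) =
      (Ideal.Quotient.mk _).comp (Polynomial.mapRingHom (Int.castRingHom (ZMod m))) := by
  apply Polynomial.ringHom_ext'
  · exact RingHom.ext_int _ _
  · simp only [RingHom.comp_apply, Polynomial.coe_mapRingHom, Polynomial.toLaurent_X,
      Polynomial.map_X]
    rw [rmHom_T]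
    simp [RmX]

lemma rmHom_toLaurent (P : Polynomial ℤ) :
    rmHom m (Polynomial.toLaurent P) =
      Ideal.Quotient.mk _ (P.map (Int.castRingHom (ZMod m))) := by
  have := congrFun (congrArg DFunLike.coe (rmHom_comp_toLaurent m)) P
  simpa using this

lemma rmHom_surjective : Function.Surjective (rmHom m) := by
  intro x
  obtain ⟨q, rfl⟩ := Ideal.Quotient.mk_surjective x
  obtain ⟨P, hP⟩ := Polynomial.map_surjective (Int.castRingHom (ZMod m))
    ZMod.intCast_surjective q
  exact ⟨Polynomial.toLaurent P, by rw [rmHom_toLaurent, hP]⟩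

lemma rmHom_ker {p : LaurentPolynomial ℤ} (hp : rmHom m p = 0) :
    ∃ u v : LaurentPolynomial ℤ, p = (m : LaurentPolynomial ℤ) * u + (T (m:ℤ) * v - v) := by
  obtain ⟨N, P, hP⟩ := p.exists_T_pow
  have h1 : Ideal.Quotient.mk (Ideal.span {(Polynomial.X : Polynomial (ZMod m)) ^ m - 1})
      (P.map (Int.castRingHom (ZMod m))) = 0 := by
    rw [← rmHom_toLaurent, hP, map_mul, hp, zero_mul]
  rw [Ideal.Quotient.eq_zero_iff_mem, Ideal.mem_span_singleton] at h1
  obtain ⟨qq, hq⟩ := h1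
  obtain ⟨Qz, hQz⟩ := Polynomial.map_surjective (Int.castRingHom (ZMod m))
    ZMod.intCast_surjective qq
  have h2 : (P - (Polynomial.X ^ m - 1) * Qz) ∈
      RingHom.ker (Polynomial.mapRingHom (Int.castRingHom (ZMod m))) := by
    rw [RingHom.mem_ker]
    simp only [Polynomial.coe_mapRingHom, Polynomial.map_sub, Polynomial.map_mul,
      Polynomial.map_pow, Polynomial.map_X, Polynomial.map_one, hQz]
    rw [← hq]
    ring
  rw [Polynomial.ker_mapRingHom, ZMod.ker_intCastRingHom, Ideal.map_span,
    Set.image_singleton, Ideal.mem_span_singleton] at h2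
  obtain ⟨Rz, hR⟩ := h2
  have hPdec : P = Polynomial.C ((m:ℕ):ℤ) * Rz + (Polynomial.X ^ m - 1) * Qz := by
    linear_combination hR
  have hp' : p = Polynomial.toLaurent P * T (-(N:ℤ)) := by
    rw [hP, mul_assoc, ← T_add]
    simp
  refine ⟨Polynomial.toLaurent Rz * T (-(N:ℤ)), Polynomial.toLaurent Qz * T (-(N:ℤ)), ?_⟩
  rw [hp', hPdec]
  simp only [map_add, map_mul, Polynomial.toLaurent_C, map_sub, map_pow,
    Polynomial.toLaurent_X, map_one, T_pow, mul_one, map_natCast]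
  ring

end AuxRing

section AuxGroup

lemma zpow_eq_pow_zmod_val {G : Type*} [Group G] {m : ℕ} [NeZero m] {g : G}
    (hg : g ^ m = 1) (z : ℤ) : g ^ z = g ^ ((z : ZMod m)).val := by
  have hdvd : (m:ℤ) ∣ z - (((z : ZMod m)).val : ℤ) := by
    rw [← ZMod.intCast_zmod_eq_zero_iff_dvd]
    push_cast
    rw [ZMod.natCast_rightInverse (z : ZMod m)]
    ring
  obtain ⟨k, hk⟩ := hdvd
  have h : z = (m:ℤ) * k + (((z : ZMod m)).val : ℤ) := by linear_combination hk
  calc g ^ z = g ^ ((m:ℤ) * k + (((z : ZMod m)).val : ℤ)) := by rw [← h]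
    _ = g ^ ((z : ZMod m)).val := by
        rw [zpow_add, zpow_mul, zpow_natCast, zpow_natCast, hg, one_zpow, one_mul]

/-- The base component of the quotient map: apply `rmHom` in each coordinate. -/
noncomputable def lampBaseHom (n m : ℕ) [NeZero m] :
    Multiplicative (LampBase n) →* Multiplicative (Fin n → Rm m) :=
  AddMonoidHom.toMultiplicative
    { toFun := fun v i => rmHom m (v i)
      map_zero' := by funext i; simp
      map_add' := fun v w => by funext i; simp }

lemma lampBaseHom_apply (n m : ℕ) [NeZero m] (v : Multiplicative (LampBase n)) :
    (lampBaseHom n m v).toAdd = fun i => rmHom m (v.toAdd i) := rfl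

/-- The cyclic component of the quotient map: reduction `ℤ → ZMod m`. -/
def lampIntHom (m : ℕ) [NeZero m] : Multiplicative ℤ →* Multiplicative (ZMod m) :=
  AddMonoidHom.toMultiplicative (Int.castAddHom (ZMod m))

lemma lampAction_apply_toAdd (n : ℕ) (z : Multiplicative ℤ) (v : Multiplicative (LampBase n)) :
    ((lampAction n z) v).toAdd = fun i => T z.toAdd * v.toAdd i := rfl

lemma finLampAction_apply_toAdd (n m : ℕ) [NeZero m] (c : Multiplicative (ZMod m))
    (v : Multiplicative (Fin n → Rm m)) :
    ((finLampAction n m c) v).toAdd = fun i => ↑(RmX m ^ (c.toAdd).val) * v.toAdd i := by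
  rfl

lemma lamp_compat (n m : ℕ) [NeZero m] (z : Multiplicative ℤ) :
    (lampBaseHom n m).comp (lampAction n z).toMonoidHom =
      ((finLampAction n m) (lampIntHom m z)).toMonoidHom.comp (lampBaseHom n m) := by
  refine MonoidHom.ext fun v => ?_
  apply Multiplicative.toAdd.injective
  rw [MonoidHom.comp_apply, MonoidHom.comp_apply, MulEquiv.coe_toMonoidHom,
    MulEquiv.coe_toMonoidHom, lampBaseHom_apply, finLampAction_apply_toAdd,
    lampBaseHom_apply, lampAction_apply_toAdd]
  funext i
  rw [map_mul, rmHom_T, zpow_eq_pow_zmod_val (RmX_pow_eq_one m)]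
  rfl

/-- The quotient map `Γ_n → Γ(m)`. -/
noncomputable def lampQuot (n m : ℕ) [NeZero m] : Lamplighter n →* FinLamplighter n m :=
  SemidirectProduct.map (lampBaseHom n m) (lampIntHom m) (lamp_compat n m)

lemma lampQuot_surjective (n m : ℕ) [NeZero m] : Function.Surjective (lampQuot n m) := by
  rintro ⟨b', z'⟩
  choose w hw using fun i => rmHom_surjective m (b'.toAdd i)
  obtain ⟨z, hz⟩ := ZMod.intCast_surjective (n := m) z'.toAdd
  refine ⟨⟨Multiplicative.ofAdd w, Multiplicative.ofAdd z⟩, ?_⟩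
  refine SemidirectProduct.ext ?_ ?_
  · show (lampBaseHom n m (Multiplicative.ofAdd w)) = b'
    apply Multiplicative.toAdd.injective
    funext i
    exact hw i
  · show (lampIntHom m (Multiplicative.ofAdd z)) = z'
    apply Multiplicative.toAdd.injective
    exact hz

end AuxGroup

/-- The finite lamplighter quotients `Γ(m)` are cofinal among the finite quotients of
the torsion-free lamplighter group `Γ_n = ℤ^n ≀ ℤ`: every surjection from `Γ_n` onto a
finite group `Q` factors through a surjection onto some `Γ(m)` with `m > 2`. -/
theorem finLamplighter_quotients_cofinal (n : ℕ) (hn : 1 ≤ n)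
    (Q : Type) [Group Q] [Finite Q]
    (f : Lamplighter n →* Q) (hf : Function.Surjective f) :
    ∃ (m : ℕ) (hm : 2 < m),
      haveI : NeZero m := ⟨by omega⟩
      ∃ (g : Lamplighter n →* FinLamplighter n m) (h : FinLamplighter n m →* Q),
        Function.Surjective g ∧ f = h.comp g := by
  classical
  have hQ1 : 0 < Nat.card Q := Nat.card_pos
  refine ⟨3 * Nat.card Q, by omega, ?_⟩
  set m := 3 * Nat.card Q with hm_def
  haveI : NeZero m := ⟨by omega⟩
  have hpow : ∀ x : Q, x ^ m = 1 := by
    intro x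
    rw [hm_def, Nat.mul_comm, pow_mul, pow_card_eq_one', one_pow]
  set q0 : Q := f (SemidirectProduct.inr (Multiplicative.ofAdd (1:ℤ))) with hq0
  have hinr : ∀ z : Multiplicative ℤ, f (SemidirectProduct.inr z) = q0 ^ z.toAdd := by
    intro z
    have hz : z = (Multiplicative.ofAdd (1:ℤ)) ^ z.toAdd := by
      apply Multiplicative.toAdd.injective
      simp
    rw [hz, map_zpow, map_zpow]
    simp
    rfl
  have hinrm : f (SemidirectProduct.inr (Multiplicative.ofAdd (m:ℤ))) = 1 := by
    rw [hinr]
    simp only [toAdd_ofAdd, zpow_natCast]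
    exact hpow q0
  -- the key kernel inclusion
  have hbase : ∀ w : Multiplicative (LampBase n), (∀ i, rmHom m (w.toAdd i) = 0) →
      f (SemidirectProduct.inl w) = 1 := by
    intro w hw
    choose u v huv using fun i => rmHom_ker m (hw i)
    have hdec : w.toAdd = (m • u) + ((lampShift n (m:ℤ)) v - v) := by
      funext i
      have h1 := huv i
      show w.toAdd i = m • u i + (T (m:ℤ) * v i - v i)
      rw [h1, nsmul_eq_mul]
    have hshift : f (SemidirectProduct.inl (Multiplicative.ofAdd ((lampShift n (m:ℤ)) v))) =
        f (SemidirectProduct.inl (Multiplicative.ofAdd v)) := by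
      have haut : (SemidirectProduct.inl (Multiplicative.ofAdd ((lampShift n (m:ℤ)) v)) :
          Lamplighter n) =
          SemidirectProduct.inr (Multiplicative.ofAdd (m:ℤ)) *
            SemidirectProduct.inl (Multiplicative.ofAdd v) *
            SemidirectProduct.inr (Multiplicative.ofAdd (m:ℤ))⁻¹ :=
        SemidirectProduct.inl_aut (Multiplicative.ofAdd (m:ℤ)) (Multiplicative.ofAdd v)
      rw [haut]
      simp [hinrm]
    have hw' : w = Multiplicative.ofAdd (m • u) *
        (Multiplicative.ofAdd ((lampShift n (m:ℤ)) v) * (Multiplicative.ofAdd v)⁻¹) := by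
      apply Multiplicative.toAdd.injective
      simp only [toAdd_mul, toAdd_ofAdd, toAdd_inv]
      rw [hdec, sub_eq_add_neg]
    have hmu : f (SemidirectProduct.inl (Multiplicative.ofAdd (m • u))) = 1 := by
      have h3 : (Multiplicative.ofAdd (m • u)) = (Multiplicative.ofAdd u) ^ m := by
        apply Multiplicative.toAdd.injective
        simp
      rw [h3, map_pow, map_pow]
      exact hpow _
    rw [hw']
    simp only [map_mul, map_inv]
    rw [hshift, hmu, one_mul, mul_inv_cancel]
  have hker : ∀ x : Lamplighter n, lampQuot n m x = 1 → f x = 1 := by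
    intro x hx
    have hb : ∀ i, rmHom m (x.left.toAdd i) = 0 := by
      intro i
      have h1 : (lampQuot n m x).left = 1 := by rw [hx]; rfl
      rw [lampQuot, SemidirectProduct.map_left] at h1
      have h2 := congrFun (congrArg Multiplicative.toAdd h1) i
      rw [lampBaseHom_apply] at h2
      exact h2
    have hz : (m:ℤ) ∣ x.right.toAdd := by
      have h1 : (lampQuot n m x).right = 1 := by rw [hx]; rfl
      rw [lampQuot, SemidirectProduct.map_right] at h1
      have h2 : ((x.right.toAdd : ℤ) : ZMod m) = 0 := congrArg Multiplicative.toAdd h1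
      exact (ZMod.intCast_zmod_eq_zero_iff_dvd _ _).mp h2
    obtain ⟨k, hk⟩ := hz
    have hxdec : x = SemidirectProduct.inl x.left * SemidirectProduct.inr x.right :=
      (SemidirectProduct.inl_left_mul_inr_right x).symm
    rw [hxdec, map_mul, hbase x.left hb, one_mul, hinr, hk, zpow_mul, zpow_natCast,
      hpow, one_zpow]
  refine ⟨lampQuot n m,
    (lampQuot n m).liftOfRightInverse (Function.surjInv (lampQuot_surjective n m))
      (Function.rightInverse_surjInv (lampQuot_surjective n m)) ⟨f, fun x hx => hker x hx⟩,
    lampQuot_surjective n m, ?_⟩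
  ext x
  simp only [MonoidHom.comp_apply]
  exact ((lampQuot n m).liftOfRightInverse_comp_apply _ _ ⟨f, fun x hx => hker x hx⟩ x).symm
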